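/- (BN reduces the Lipschitz constant of the loss.) With â, g, γ, σ, C and h as in the context, the BN gradient is no larger than the non-BN gradient up to the factor |γ|/σ: ‖h‖ ≤ (|γ|/σ)·‖g‖. -/

import Mathlib

open scoped InnerProductSpace

/-- **BN reduces the Lipschitz constant of the loss.**
Work in `ℝ^C` (`C ≥ 1`) with the all-ones vector `ones`. Let `ahat` (denoted `â` in the
paper) be a batch-normalized representation (`⟪ones, ahat⟫ = 0`, `‖ahat‖² = C`), `g` the
gradient of the loss of the non-BN model, `γ` the BN affine scale and `σ > 0` the batch
standard deviation. The gradient of the BN model w.r.t. the pre-normalization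
representation is `h = (γ/σ) • (g - (⟪ones, g⟫/C) • ones - (⟪g, ahat⟫/C) • ahat)`,
and it is no larger than the non-BN gradient up to the factor `|γ|/σ`:
`‖h‖ ≤ (|γ|/σ) · ‖g‖`. -/
theorem bn_reduces_lipschitz (C : ℕ) (hC : 1 ≤ C)
    (ones ahat g h : EuclideanSpace ℝ (Fin C))
    (hones : ones = WithLp.toLp 2 (fun _ => (1 : ℝ)))
    (γ σ : ℝ) (hσ : 0 < σ)
    (hmean : ⟪ones, ahat⟫_ℝ = 0)
    (hvar : ‖ahat‖ ^ 2 = (C : ℝ))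
    (hh : h = (γ / σ) •
      (g - (⟪ones, g⟫_ℝ / (C : ℝ)) • ones - (⟪g, ahat⟫_ℝ / (C : ℝ)) • ahat)) :
    ‖h‖ ≤ |γ| / σ * ‖g‖ := by
  have hCpos : (0:ℝ) < C := by exact_mod_cast hC
  have hoo : ⟪ones, ones⟫_ℝ = (C:ℝ) := by
    subst hones
    simp [PiLp.inner_apply, EuclideanSpace.norm_eq]
  have haa : ⟪ahat, ahat⟫_ℝ = (C:ℝ) := by
    rw [real_inner_self_eq_norm_sq, hvar]
  set a := ⟪ones, g⟫_ℝ / (C:ℝ) with ha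
  set b := ⟪g, ahat⟫_ℝ / (C:ℝ) with hb
  set v := g - a • ones - b • ahat with hv
  have hvg : ‖v‖ ≤ ‖g‖ := by
    have h1 : ⟪ones, g⟫_ℝ = a * C := by rw [ha, div_mul_cancel₀ _ hCpos.ne']
    have h2 : ⟪g, ahat⟫_ℝ = b * C := by rw [hb, div_mul_cancel₀ _ hCpos.ne']
    have h3 : ⟪g, ones⟫_ℝ = a * C := by rw [real_inner_comm]; exact h1
    have h4 : ⟪ahat, g⟫_ℝ = b * C := by rw [real_inner_comm]; exact h2
    have h5 : ⟪ahat, ones⟫_ℝ = 0 := by rw [real_inner_comm]; exact hmean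
    have key : ⟪v, v⟫_ℝ = ⟪g, g⟫_ℝ - a^2 * C - b^2 * C := by
      simp only [hv, inner_sub_left, inner_sub_right, inner_smul_left, inner_smul_right,
        RCLike.conj_to_real, h1, h2, h3, h4, h5, hmean, hoo, haa]
      ring
    have hg2 : ‖v‖^2 ≤ ‖g‖^2 := by
      rw [← real_inner_self_eq_norm_sq, ← real_inner_self_eq_norm_sq, key]
      nlinarith [sq_nonneg a, sq_nonneg b]
    nlinarith [norm_nonneg v, norm_nonneg g]
  rw [hh, norm_smul, Real.norm_eq_abs, abs_div, abs_of_pos hσ]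
  exact mul_le_mul_of_nonneg_left hvg (by positivity)
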